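/- Define for t ∈ [0,2): u(x,t) = -t/2+1 for x ≤ -t²/4+t-1; u(x,t) = -x/(1-t/2) for -t²/4+t-1 ≤ x ≤ 0; u(x,t) = tx/(t²/2+2) for 0 ≤ x ≤ t²/4+1; u(x,t) = t/2 for x ≥ t²/4+1; and ρ(x,t) = 1/(t²/4+1) for 0 < x ≤ t²/4+1, ρ = 0 otherwise. Then for every t ∈ [0,2), ∫_ℝ (u_x(x,t)² + ρ(x,t)²) dx = 2. -/

import Mathlib

open MeasureTheory

/-- The explicit piecewise-linear `u` from the wave-breaking example. -/
noncomputable def uEx (x t : ℝ) : ℝ :=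
  if x ≤ -t ^ 2 / 4 + t - 1 then -t / 2 + 1
  else if x ≤ 0 then -x / (1 - t / 2)
  else if x ≤ t ^ 2 / 4 + 1 then t * x / (t ^ 2 / 2 + 2)
  else t / 2

/-- The explicit `ρ` from the wave-breaking example. -/
noncomputable def rhoEx (x t : ℝ) : ℝ :=
  if 0 < x ∧ x ≤ t ^ 2 / 4 + 1 then 1 / (t ^ 2 / 4 + 1) else 0

/-- The total energy `∫ (u_x² + ρ²) dx` equals `2` for all `t ∈ [0,2)`. -/
theorem energy_conserved_example :
    ∀ t ∈ Set.Ico (0 : ℝ) 2,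
      ∫ x : ℝ, ((deriv (fun x => uEx x t) x) ^ 2 + (rhoEx x t) ^ 2) = 2 := by
  rintro t ⟨ht0, ht2⟩
  have hc : (0:ℝ) < 1 - t / 2 := by linarith
  set a : ℝ := -t ^ 2 / 4 + t - 1 with ha_def
  set b : ℝ := t ^ 2 / 4 + 1 with hb_def
  have ha0 : a < 0 := by
    rw [ha_def]
    nlinarith [mul_pos (by linarith : (0:ℝ) < 2 - t) (by linarith : (0:ℝ) < 2 - t)]
  have hb0 : (0:ℝ) < b := by positivity
  set c1 : ℝ := (1 / (1 - t / 2)) ^ 2 with hc1_def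
  set c2 : ℝ := (t / (t ^ 2 / 2 + 2)) ^ 2 + (1 / b) ^ 2 with hc2_def
  set g : ℝ → ℝ := fun x =>
    Set.indicator (Set.Ioo a 0) (fun _ => c1) x
      + Set.indicator (Set.Ioc 0 b) (fun _ => c2) x with hg_def
  have hnull : volume ({a, 0, b} : Set ℝ) = 0 :=
    Set.Countable.measure_zero (Set.to_countable _) _
  have hae : (fun x => (deriv (fun x => uEx x t) x) ^ 2 + (rhoEx x t) ^ 2) =ᵐ[volume] g := by
    refine Filter.eventuallyEq_of_mem (compl_mem_ae_iff.mpr hnull) fun x hx => ?_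
    simp only [Set.mem_compl_iff, Set.mem_insert_iff, Set.mem_singleton_iff, not_or] at hx
    obtain ⟨hxa, hx0, hxb⟩ := hx
    rcases lt_or_gt_of_ne hxa with h1 | h1
    · -- x < a
      have hd : deriv (fun x => uEx x t) x = 0 := by
        have hev : (fun y => uEx y t) =ᶠ[nhds x] fun _ => -t / 2 + 1 := by
          filter_upwards [Iio_mem_nhds h1] with y hy
          have hy' : y < a := hy
          simp only [uEx, ← ha_def, if_pos hy'.le]
        rw [hev.deriv_eq, deriv_const]
      have hr : rhoEx x t = 0 := by
        rw [rhoEx, if_neg]; rintro ⟨h, -⟩; linarith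
      have hg : g x = 0 := by
        simp only [hg_def, Set.indicator_apply, Set.mem_Ioo, Set.mem_Ioc]
        rw [if_neg (by rintro ⟨h, -⟩; linarith), if_neg (by rintro ⟨h, -⟩; linarith)]
        ring
      rw [hd, hr, hg]; ring
    · rcases lt_or_gt_of_ne hx0 with h2 | h2
      · -- a < x < 0
        have hd : deriv (fun x => uEx x t) x = -1 / (1 - t / 2) := by
          have hev : (fun y => uEx y t) =ᶠ[nhds x] fun y => -y / (1 - t / 2) := by
            filter_upwards [Ioo_mem_nhds h1 h2] with y hy
            simp only [uEx, ← ha_def, if_neg (not_le.mpr hy.1), if_pos hy.2.le]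
          rw [hev.deriv_eq]
          have hda : HasDerivAt (fun y : ℝ => -y / (1 - t / 2)) (-1 / (1 - t / 2)) x := by
            simpa using ((hasDerivAt_id x).neg.div_const (1 - t / 2))
          exact hda.deriv
        have hr : rhoEx x t = 0 := by
          rw [rhoEx, if_neg]; rintro ⟨h, -⟩; linarith
        have hg : g x = c1 := by
          simp only [hg_def]
          simp only [Set.indicator_apply, Set.mem_Ioo, Set.mem_Ioc]
          rw [if_pos ⟨h1, h2⟩, if_neg (by rintro ⟨h, -⟩; linarith)]
          ring
        rw [hd, hr, hg, hc1_def]; ring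
      · rcases lt_or_gt_of_ne hxb with h3 | h3
        · -- 0 < x < b
          have hd : deriv (fun x => uEx x t) x = t / (t ^ 2 / 2 + 2) := by
            have hev : (fun y => uEx y t) =ᶠ[nhds x] fun y => t * y / (t ^ 2 / 2 + 2) := by
              filter_upwards [Ioo_mem_nhds h2 h3] with y hy
              simp only [uEx, ← ha_def, ← hb_def, if_neg (not_le.mpr (lt_trans ha0 hy.1)),
                if_neg (not_le.mpr hy.1), if_pos hy.2.le]
            rw [hev.deriv_eq]
            have hda : HasDerivAt (fun y : ℝ => t * y / (t ^ 2 / 2 + 2))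
                (t / (t ^ 2 / 2 + 2)) x := by
              simpa using (((hasDerivAt_id x).const_mul t).div_const (t ^ 2 / 2 + 2))
            exact hda.deriv
          have hr : rhoEx x t = 1 / b := by
            rw [rhoEx, ← hb_def, if_pos ⟨h2, h3.le⟩]
          have hg : g x = c2 := by
            simp only [hg_def]
            simp only [Set.indicator_apply, Set.mem_Ioo, Set.mem_Ioc]
            rw [if_neg (by rintro ⟨-, h⟩; linarith : ¬(a < x ∧ x < 0)),
              if_pos (⟨h2, h3.le⟩ : 0 < x ∧ x ≤ b)]
            ring
          rw [hd, hr, hg, hc2_def]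
        · -- b < x
          have hd : deriv (fun x => uEx x t) x = 0 := by
            have hev : (fun y => uEx y t) =ᶠ[nhds x] fun _ => t / 2 := by
              filter_upwards [Ioi_mem_nhds h3] with y hy
              have hy' : b < y := hy
              simp only [uEx, ← ha_def, ← hb_def,
                if_neg (not_le.mpr (lt_trans ha0 (lt_trans hb0 hy'))),
                if_neg (not_le.mpr (lt_trans hb0 hy')), if_neg (not_le.mpr hy')]
            rw [hev.deriv_eq, deriv_const]
          have hr : rhoEx x t = 0 := by
            rw [rhoEx, ← hb_def, if_neg]; rintro ⟨-, h⟩; linarith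
          have hg : g x = 0 := by
            simp only [hg_def]
            simp only [Set.indicator_apply, Set.mem_Ioo, Set.mem_Ioc]
            rw [if_neg (by rintro ⟨-, h⟩; linarith), if_neg (by rintro ⟨-, h⟩; linarith)]
            ring
          rw [hd, hr, hg]; ring
  rw [integral_congr_ae hae]
  have hi1 : Integrable (Set.indicator (Set.Ioo a 0) fun _ => c1) volume := by
    rw [integrable_indicator_iff measurableSet_Ioo]
    exact (integrableOn_const_iff).mpr (Or.inr measure_Ioo_lt_top)
  have hi2 : Integrable (Set.indicator (Set.Ioc 0 b) fun _ => c2) volume := by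
    rw [integrable_indicator_iff measurableSet_Ioc]
    exact (integrableOn_const_iff).mpr (Or.inr measure_Ioc_lt_top)
  simp only [hg_def]
  rw [integral_add hi1 hi2, integral_indicator_const _ measurableSet_Ioo,
    integral_indicator_const _ measurableSet_Ioc, Real.volume_real_Ioo_of_le (by linarith), Real.volume_real_Ioc_of_le (by linarith)]
  simp only [smul_eq_mul]
  have hq : t ^ 2 / 2 + 2 ≠ 0 := by positivity
  have h2t : (1:ℝ) - t / 2 ≠ 0 := ne_of_gt hc
  have hb' : t ^ 2 / 4 + 1 ≠ 0 := by positivity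
  rw [hc1_def, hc2_def, ha_def, hb_def]
  have e1 : (0 - (-t ^ 2 / 4 + t - 1)) * (1 / (1 - t / 2)) ^ 2 = 1 := by
    have key : (0 - (-t ^ 2 / 4 + t - 1)) = (1 - t / 2) ^ 2 := by ring
    rw [key, div_pow, one_pow, mul_one_div, div_self (pow_ne_zero 2 h2t)]
  have e2 : (t ^ 2 / 4 + 1 - 0) * ((t / (t ^ 2 / 2 + 2)) ^ 2 + (1 / (t ^ 2 / 4 + 1)) ^ 2) = 1 := by
    field_simp [hq, hb']
    ring
  linarith [e1, e2]
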